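/- Let m > 1, p > m-1, q = mp/(p+1), and M a real number with |M| ≤ μ*(m) := (p+1)((m-1)/p)^{p/(p+1)}. For v > 0 define F(X) = (m-1)X + e^{(p-m+1)v} + M e^{(q-m+1)v} X^{p/(p+1)} for X ≥ 0. Then F(X) ≥ 0 for all X ≥ 0. -/

import Mathlib

open Real

theorem stmt7 (m p q M v : ℝ) (hm : 1 < m) (hp : m - 1 < p)
    (hq : q = m * p / (p + 1))
    (hM : |M| ≤ (p + 1) * ((m - 1) / p) ^ (p / (p + 1)))
    (hv : 0 < v) :
    ∀ X : ℝ, 0 ≤ X →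
      0 ≤ (m - 1) * X + Real.exp ((p - m + 1) * v)
          + M * Real.exp ((q - m + 1) * v) * X ^ (p / (p + 1)) := by
  intro X hX
  have hp0 : 0 < p := by linarith
  have hp1 : 0 < p + 1 := by linarith
  set θ : ℝ := p / (p + 1) with hθdef
  have hθpos : 0 < θ := div_pos hp0 hp1
  have hθsum : θ + 1 / (p + 1) = 1 := by rw [hθdef]; field_simp
  rcases le_or_gt 0 M with hM0 | hM0
  · have h3 : 0 ≤ M * Real.exp ((q - m + 1) * v) * X ^ θ :=
      mul_nonneg (mul_nonneg hM0 (exp_pos _).le) (rpow_nonneg hX _)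
    have h1 : 0 ≤ (m - 1) * X := mul_nonneg (by linarith) hX
    have h2 := (exp_pos ((p - m + 1) * v)).le
    linarith
  · -- M < 0
    set lam : ℝ := (m - 1) * (p + 1) / p with hlam
    have hlampos : 0 < lam := by rw [hlam]; exact div_pos (mul_pos (by linarith) hp1) hp0
    set E : ℝ := Real.exp ((p - m + 1) * v) with hE
    have hkey := Real.geom_mean_le_arith_mean2_weighted
      (le_of_lt hθpos) (by positivity : (0:ℝ) ≤ 1 / (p + 1))
      (mul_nonneg hlampos.le hX) (by positivity : (0:ℝ) ≤ (p + 1) * E) hθsum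
    -- RHS simplification
    have hrhs : θ * (lam * X) + 1 / (p + 1) * ((p + 1) * E) = (m - 1) * X + E := by
      have : θ * lam = m - 1 := by
        rw [hθdef, hlam]
        field_simp
      rw [← mul_assoc, this]
      field_simp
    -- LHS lower bound: |M| * exp((q-m+1)v) * X^θ ≤ (lam*X)^θ * ((p+1)*E)^(1/(p+1))
    have hqe : (q - m + 1) * v = ((p - m + 1) * v) * (1 / (p + 1)) := by
      have hq' : q - m + 1 = (p - m + 1) / (p + 1) := by
        rw [hq]; field_simp; ring
      rw [hq']; field_simp
    have hE' : Real.exp ((q - m + 1) * v) = E ^ (1 / (p + 1)) := by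
      rw [hqe, Real.exp_mul]
    have hsplit1 : (lam * X) ^ θ = lam ^ θ * X ^ θ :=
      Real.mul_rpow hlampos.le hX
    have hsplit2 : ((p + 1) * E) ^ (1 / (p + 1)) = (p + 1) ^ (1 / (p + 1)) * E ^ (1 / (p + 1)) :=
      Real.mul_rpow hp1.le (exp_pos _).le
    have hcoef : |M| ≤ lam ^ θ * (p + 1) ^ (1 / (p + 1)) := by
      have h1 : lam ^ θ = ((m - 1) / p) ^ θ * (p + 1) ^ θ := by
        rw [← Real.mul_rpow (div_nonneg (by linarith) hp0.le) hp1.le]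
        congr 1
        rw [hlam]; ring
      have h2 : (p + 1 : ℝ) ^ θ * (p + 1) ^ (1 / (p + 1)) = p + 1 := by
        rw [← Real.rpow_add hp1, hθsum, Real.rpow_one]
      calc |M| ≤ (p + 1) * ((m - 1) / p) ^ θ := hM
        _ = ((m - 1) / p) ^ θ * ((p + 1) ^ θ * (p + 1) ^ (1 / (p + 1))) := by rw [h2]; ring
        _ = lam ^ θ * (p + 1) ^ (1 / (p + 1)) := by rw [h1]; ring
    have hXθ : 0 ≤ X ^ θ := rpow_nonneg hX _
    have hlhs : |M| * Real.exp ((q - m + 1) * v) * X ^ θ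
        ≤ (lam * X) ^ θ * ((p + 1) * E) ^ (1 / (p + 1)) := by
      rw [hE', hsplit1, hsplit2]
      have hE'pos : (0:ℝ) ≤ E ^ (1 / (p + 1)) := rpow_nonneg (exp_pos _).le _
      calc |M| * E ^ (1 / (p + 1)) * X ^ θ
          ≤ lam ^ θ * (p + 1) ^ (1 / (p + 1)) * E ^ (1 / (p + 1)) * X ^ θ := by
            apply mul_le_mul_of_nonneg_right _ hXθ
            exact mul_le_mul_of_nonneg_right hcoef hE'pos
        _ = lam ^ θ * X ^ θ * ((p + 1) ^ (1 / (p + 1)) * E ^ (1 / (p + 1))) := by ring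
    have habs : |M| = -M := abs_of_neg hM0
    have hfinal : |M| * Real.exp ((q - m + 1) * v) * X ^ θ ≤ (m - 1) * X + E := by
      calc |M| * Real.exp ((q - m + 1) * v) * X ^ θ
          ≤ (lam * X) ^ θ * ((p + 1) * E) ^ (1 / (p + 1)) := hlhs
        _ ≤ θ * (lam * X) + 1 / (p + 1) * ((p + 1) * E) := hkey
        _ = (m - 1) * X + E := hrhs
    rw [habs] at hfinal
    linarith
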